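/- For two horizontally adjacent marked vertices on the n×n torus with self-loop weight l = 4/n², the probability of measuring a marked vertex after any number t of steps of the lackadaisical search walk U' started from |ψ(0)⟩ is O(1/n²); concretely, p_M(t) ≤ C/n² for an absolute constant C independent of n and t. -/

import Mathlib

open Matrix

/-- Basis index of the walk space on the `n×n` torus with a 5-dimensional coin:
position `(i,j) ∈ (ℤ/nℤ)²` and coin `c ∈ Fin 5` with `0=↑, 1=↓, 2=←, 3=→, 4=↺`. -/
abbrev WalkIdx (n : ℕ) := ZMod n × ZMod n × Fin 5

/-- The action of the flip-flop shift with self-loop on basis indices. -/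
def shiftIdx (n : ℕ) : WalkIdx n → WalkIdx n
  | (i, j, c) =>
    if c = 0 then (i, j + 1, 1)
    else if c = 1 then (i, j - 1, 0)
    else if c = 2 then (i - 1, j, 3)
    else if c = 3 then (i + 1, j, 2)
    else (i, j, c)

/-- The flip-flop shift operator with self-loop, as a matrix:
`S|i,j,↑⟩=|i,j+1,↓⟩`, `S|i,j,↓⟩=|i,j−1,↑⟩`, `S|i,j,←⟩=|i−1,j,→⟩`,
`S|i,j,→⟩=|i+1,j,←⟩`, `S|i,j,↺⟩=|i,j,↺⟩` (indices mod `n`). -/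
noncomputable def shiftOp (n : ℕ) : Matrix (WalkIdx n) (WalkIdx n) ℂ :=
  fun x y => if x = shiftIdx n y then 1 else 0

/-- The Grover self-loop coin state `|s_c⟩`. -/
noncomputable def scState (l : ℝ) : Fin 5 → ℂ :=
  fun c => if c = 4 then (Real.sqrt l : ℂ) / (Real.sqrt (4 + l) : ℂ)
           else 1 / (Real.sqrt (4 + l) : ℂ)

/-- The 5-dimensional Grover coin `C = 2|s_c⟩⟨s_c| − I₅`. -/
noncomputable def groverCoin (l : ℝ) : Matrix (Fin 5) (Fin 5) ℂ :=
  (2 : ℂ) • Matrix.vecMulVec (scState l) (star (scState l)) - 1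

/-- The coin operator `I ⊗ C` on the full walk space. -/
noncomputable def coinOp (n : ℕ) (l : ℝ) : Matrix (WalkIdx n) (WalkIdx n) ℂ :=
  fun x y => if x.1 = y.1 ∧ x.2.1 = y.2.1 then groverCoin l x.2.2 y.2.2 else 0

/-- One step of the lackadaisical walk (without search): `U = S·(I ⊗ C)`. -/
noncomputable def walkOp (n : ℕ) [NeZero n] (l : ℝ) : Matrix (WalkIdx n) (WalkIdx n) ℂ :=
  shiftOp n * coinOp n l

/-- The query `Q ⊗ I₅`: flips the sign at the marked vertices `M`. -/
noncomputable def queryOp (n : ℕ) (M : Finset (ZMod n × ZMod n)) :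
    Matrix (WalkIdx n) (WalkIdx n) ℂ :=
  fun x y => if x = y then (if (x.1, x.2.1) ∈ M then -1 else 1) else 0

/-- One step of the search walk: `U' = S·(I⊗C)·(Q⊗I₅)`. -/
noncomputable def searchOp (n : ℕ) [NeZero n] (l : ℝ) (M : Finset (ZMod n × ZMod n)) :
    Matrix (WalkIdx n) (WalkIdx n) ℂ :=
  shiftOp n * coinOp n l * queryOp n M

/-- The uniform initial state `|ψ(0)⟩ = (1/n) Σ_{i,j} |i,j⟩ ⊗ |s_c⟩`. -/
noncomputable def psi0 (n : ℕ) (l : ℝ) : WalkIdx n → ℂ :=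
  fun x => (1 / (n : ℂ)) * scState l x.2.2

/-- The probability of finding a marked vertex after `t` steps of the search walk
started from the uniform state. -/
noncomputable def probMarked (n : ℕ) [NeZero n] (l : ℝ)
    (M : Finset (ZMod n × ZMod n)) (t : ℕ) : ℝ :=
  ∑ x : WalkIdx n, if (x.1, x.2.1) ∈ M
    then ‖((searchOp n l M ^ t).mulVec (psi0 n l)) x‖ ^ 2 else 0

/-! ### Auxiliary lemmas -/

section Aux

lemma shiftIdx_invol (n : ℕ) : Function.Involutive (shiftIdx n) := by
  rintro ⟨i, j, c⟩
  fin_cases c <;> simp_all [shiftIdx]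

lemma shiftOp_mulVec (n : ℕ) [NeZero n] (u : WalkIdx n → ℂ) :
    (shiftOp n).mulVec u = fun x => u (shiftIdx n x) := by
  funext x
  simp only [Matrix.mulVec, dotProduct, shiftOp, ite_mul, one_mul, zero_mul]
  have h : ∀ y : WalkIdx n, (x = shiftIdx n y) ↔ (y = shiftIdx n x) := by
    intro y
    constructor
    · rintro rfl; exact (shiftIdx_invol n y).symm
    · rintro rfl; exact (shiftIdx_invol n x).symm
  rw [Finset.sum_congr rfl (fun y _ => by rw [if_congr (h y) rfl rfl])]
  simp

lemma queryOp_mulVec (n : ℕ) [NeZero n] (M : Finset (ZMod n × ZMod n)) (v : WalkIdx n → ℂ) :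
    (queryOp n M).mulVec v = fun x => (if (x.1, x.2.1) ∈ M then -1 else 1) * v x := by
  funext x
  simp only [Matrix.mulVec, dotProduct, queryOp, ite_mul, zero_mul, mul_ite]
  rw [Finset.sum_ite_eq (Finset.univ) x
    (fun y => if (x.1, x.2.1) ∈ M then (-1:ℂ) * v y else 1 * v y)]
  simp [mul_ite]

lemma coinOp_mulVec (n : ℕ) [NeZero n] (l : ℝ) (w : WalkIdx n → ℂ) (i j : ZMod n) (c : Fin 5) :
    (coinOp n l).mulVec w (i, j, c) = ∑ c' : Fin 5, groverCoin l c c' * w (i, j, c') := by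
  simp only [Matrix.mulVec, dotProduct, coinOp]
  rw [Fintype.sum_prod_type]
  simp only [Fintype.sum_prod_type]
  simp [ite_and, Finset.sum_ite_eq, ite_mul, zero_mul]

lemma grover_row (l : ℝ) (v : Fin 5 → ℂ) (c : Fin 5) :
    ∑ c' : Fin 5, groverCoin l c c' * v c'
      = 2 * scState l c * (∑ c' : Fin 5, star (scState l c') * v c') - v c := by
  simp only [groverCoin, Matrix.sub_apply, Matrix.smul_apply, Matrix.vecMulVec_apply,
    Matrix.one_apply, smul_eq_mul, sub_mul, ite_mul, one_mul, zero_mul, Pi.star_apply]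
  rw [Finset.sum_sub_distrib]
  rw [Finset.sum_ite_eq Finset.univ c v]
  simp [Finset.mul_sum]; ring_nf

/-- Real form of the coin state entries. -/
noncomputable def scR (l : ℝ) : Fin 5 → ℝ :=
  fun c => (if c = 4 then Real.sqrt l else 1) / Real.sqrt (4 + l)

lemma scState_eq (l : ℝ) (c : Fin 5) : scState l c = ((scR l c : ℝ) : ℂ) := by
  fin_cases c <;> simp [scState, scR]

lemma star_scState (l : ℝ) (c : Fin 5) : star (scState l c) = scState l c := by
  rw [scState_eq]; exact Complex.conj_ofReal _

lemma sum_scR_sq (l : ℝ) (hl : 0 ≤ l) : ∑ c' : Fin 5, scR l c' * scR l c' = 1 := by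
  have h4 : (0:ℝ) < 4 + l := by linarith
  have hq2 : Real.sqrt (4 + l) * Real.sqrt (4 + l) = 4 + l := Real.mul_self_sqrt h4.le
  have hl2 : Real.sqrt l * Real.sqrt l = l := Real.mul_self_sqrt hl
  have hqne : Real.sqrt (4 + l) ≠ 0 := by positivity
  rw [Fin.sum_univ_five]
  simp [scR]
  field_simp
  linear_combination hl2 - hq2

lemma sum_star_scState (l : ℝ) (hl : 0 ≤ l) :
    ∑ c' : Fin 5, star (scState l c') * scState l c' = 1 := by
  have : ∀ c' : Fin 5, star (scState l c') * scState l c' = ((scR l c' * scR l c' : ℝ) : ℂ) := by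
    intro c'; rw [star_scState, scState_eq]; push_cast; ring
  simp only [this]
  rw [← Complex.ofReal_sum]
  rw [sum_scR_sq l hl]
  norm_num

/-- The perturbation `φ = ψ(0) − φ_stat`, supported on the two internal-edge coordinates. -/
noncomputable def phiPert (n : ℕ) (l : ℝ) (i₀ j₀ : ZMod n) : WalkIdx n → ℂ :=
  fun x => if x = (i₀, j₀, (3 : Fin 5)) ∨ x = (i₀ + 1, j₀, (2 : Fin 5))
    then ((4 + l : ℝ) : ℂ) * ((1 / (n : ℂ)) * (1 / ((Real.sqrt (4 + l) : ℝ) : ℂ))) else 0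

/-- The stationary state `φ_stat`. -/
noncomputable def phiStat (n : ℕ) (l : ℝ) (i₀ j₀ : ZMod n) : WalkIdx n → ℂ :=
  fun x => psi0 n l x - phiPert n l i₀ j₀ x

lemma phiStat_unmarked (n : ℕ) (l : ℝ) (i₀ j₀ i j : ZMod n) (c : Fin 5)
    (hm1 : (i, j) ≠ (i₀, j₀)) (hm2 : (i, j) ≠ (i₀ + 1, j₀)) :
    phiStat n l i₀ j₀ (i, j, c) = (1 / (n : ℂ)) * scState l c := by
  have hc : ¬((i, j, c) = (i₀, j₀, (3 : Fin 5)) ∨ (i, j, c) = (i₀ + 1, j₀, (2 : Fin 5))) := by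
    rintro (h | h)
    · exact hm1 (by simpa using congrArg (fun y : WalkIdx n => (y.1, y.2.1)) h)
    · exact hm2 (by simpa using congrArg (fun y : WalkIdx n => (y.1, y.2.1)) h)
  simp only [phiStat, phiPert, psi0]
  rw [if_neg hc]
  ring

lemma coin_query_fix (n : ℕ) [NeZero n] (l : ℝ) (hl : 0 ≤ l) (i₀ j₀ : ZMod n)
    (h1 : i₀ + 1 ≠ i₀) :
    (coinOp n l).mulVec (fun x =>
        (if (x.1, x.2.1) ∈ ({(i₀, j₀), (i₀ + 1, j₀)} : Finset (ZMod n × ZMod n)) then -1 else 1)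
          * phiStat n l i₀ j₀ x)
      = phiStat n l i₀ j₀ := by
  have h4 : (0:ℝ) < 4 + l := by linarith
  have hq2 : Real.sqrt (4 + l) * Real.sqrt (4 + l) = 4 + l := Real.mul_self_sqrt h4.le
  have hl2 : Real.sqrt l * Real.sqrt l = l := Real.mul_self_sqrt hl
  have hqne : Real.sqrt (4 + l) ≠ 0 := by positivity
  have hnne : (n : ℂ) ≠ 0 := Nat.cast_ne_zero.mpr (NeZero.ne n)
  have hqneC : ((Real.sqrt (4 + l) : ℝ) : ℂ) ≠ 0 := Complex.ofReal_ne_zero.mpr hqne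
  have h1' : ¬(i₀ = i₀ + 1) := fun h => h1 h.symm
  have hz : (1 : ZMod n) ≠ 0 := by intro h; apply h1; rw [h, add_zero]
  have hz' : (0 : ZMod n) ≠ 1 := Ne.symm hz
  have hl2C : ((Real.sqrt l : ℝ) : ℂ) * ((Real.sqrt l : ℝ) : ℂ) = ((l:ℝ) : ℂ) := by
    rw [← Complex.ofReal_mul, hl2]
  funext x
  obtain ⟨i, j, c⟩ := x
  rw [coinOp_mulVec]
  rw [grover_row]
  by_cases hm1 : (i, j) = (i₀, j₀)
  · -- first marked vertex
    obtain ⟨hi, hj⟩ : i = i₀ ∧ j = j₀ := by simpa [Prod.ext_iff] using hm1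
    simp only [hi, hj]
    have hmem : ((i₀ : ZMod n), j₀) ∈ ({(i₀, j₀), (i₀ + 1, j₀)} : Finset (ZMod n × ZMod n)) :=
      Finset.mem_insert_self _ _
    simp only [hmem, if_true]
    have hT : (∑ c' : Fin 5, star (scState l c') * ((-1) * phiStat n l i₀ j₀ (i₀, j₀, c'))) = 0 := by
      rw [Fin.sum_univ_five]
      simp only [star_scState, scState_eq, phiStat, phiPert, psi0, Prod.mk.injEq]
      simp [h1', hz, hz', scR]
      field_simp
      linear_combination -hl2C
    rw [hT]
    ring
  · by_cases hm2 : (i, j) = (i₀ + 1, j₀)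
    · -- second marked vertex
      obtain ⟨hi, hj⟩ : i = i₀ + 1 ∧ j = j₀ := by simpa [Prod.ext_iff] using hm2
      simp only [hi, hj]
      have hmem : ((i₀ + 1 : ZMod n), j₀) ∈ ({(i₀, j₀), (i₀ + 1, j₀)} : Finset (ZMod n × ZMod n)) := by
        simp
      simp only [hmem, if_true]
      have hT : (∑ c' : Fin 5, star (scState l c') * ((-1) * phiStat n l i₀ j₀ (i₀ + 1, j₀, c'))) = 0 := by
        rw [Fin.sum_univ_five]
        simp only [star_scState, scState_eq, phiStat, phiPert, psi0, Prod.mk.injEq]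
        simp [h1, h1', hz, hz', scR]
        field_simp
        linear_combination -hl2C
      rw [hT]
      ring
    · -- unmarked vertex
      have hmem : ((i : ZMod n), j) ∉ ({(i₀, j₀), (i₀ + 1, j₀)} : Finset (ZMod n × ZMod n)) := by
        simp only [Finset.mem_insert, Finset.mem_singleton]
        rintro (h | h)
        · exact hm1 h
        · exact hm2 h
      simp only [hmem, if_false]
      have hT : (∑ c' : Fin 5, star (scState l c') * ((1:ℂ) * phiStat n l i₀ j₀ (i, j, c'))) =
          1 / (n : ℂ) := by
        have he : ∀ c' : Fin 5, star (scState l c') * ((1:ℂ) * phiStat n l i₀ j₀ (i, j, c'))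
            = (1 / (n : ℂ)) * (star (scState l c') * scState l c') := by
          intro c'
          rw [phiStat_unmarked n l i₀ j₀ i j c' hm1 hm2]
          ring
        rw [Finset.sum_congr rfl (fun c' _ => he c'), ← Finset.mul_sum, sum_star_scState l hl]
        ring
      rw [hT]
      rw [phiStat_unmarked n l i₀ j₀ i j c hm1 hm2]
      ring

lemma phiStat_shift (n : ℕ) (l : ℝ) (i₀ j₀ : ZMod n) (x : WalkIdx n) :
    phiStat n l i₀ j₀ (shiftIdx n x) = phiStat n l i₀ j₀ x := by
  obtain ⟨i, j, c⟩ := x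
  fin_cases c <;>
    simp [shiftIdx, phiStat, phiPert, psi0, scState, Prod.ext_iff, sub_eq_iff_eq_add]

lemma row_s (l : ℝ) (hl : 0 ≤ l) (c'' : Fin 5) :
    ∑ c' : Fin 5, star (scState l c') * groverCoin l c' c'' = star (scState l c'') := by
  simp only [groverCoin, Matrix.sub_apply, Matrix.smul_apply, Matrix.vecMulVec_apply,
    Matrix.one_apply, smul_eq_mul, Pi.star_apply, mul_sub, mul_ite, mul_one, mul_zero]
  rw [Finset.sum_sub_distrib]
  rw [Finset.sum_ite_eq' Finset.univ c'' (fun c' => star (scState l c'))]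
  have h : ∀ c' : Fin 5, star (scState l c') * (2 * (scState l c' * star (scState l c'')))
      = (2 * star (scState l c'')) * (star (scState l c') * scState l c') := by
    intro c'; ring
  rw [Finset.sum_congr rfl (fun c' _ => h c'), ← Finset.mul_sum, sum_star_scState l hl]
  simp
  ring

lemma grover_mul_self (l : ℝ) (hl : 0 ≤ l) : groverCoin l * groverCoin l = 1 := by
  ext c c''
  rw [Matrix.mul_apply]
  rw [grover_row l (fun c' => groverCoin l c' c'') c]
  rw [row_s l hl c'']
  simp only [groverCoin, Matrix.sub_apply, Matrix.smul_apply, Matrix.vecMulVec_apply,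
    Matrix.one_apply, smul_eq_mul, Pi.star_apply]
  ring

lemma grover_herm (l : ℝ) : (groverCoin l)ᴴ = groverCoin l := by
  ext c c'
  simp only [Matrix.conjTranspose_apply, groverCoin, Matrix.sub_apply, Matrix.smul_apply,
    Matrix.vecMulVec_apply, Matrix.one_apply, smul_eq_mul, Pi.star_apply]
  rw [star_sub, star_mul', star_mul']
  simp [star_scState, eq_comm, apply_ite (star (R := ℂ))]
  ring

lemma grover_unitary (l : ℝ) (hl : 0 ≤ l) : (groverCoin l)ᴴ * groverCoin l = 1 := by
  rw [grover_herm, grover_mul_self l hl]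

/-- A matrix with `Aᴴ A = 1` preserves the Euclidean norm. -/
lemma norm_mulVec_eq {m : Type*} [Fintype m] [DecidableEq m] (A : Matrix m m ℂ)
    (h : Aᴴ * A = 1) (v : m → ℂ) :
    ∑ x, ‖A.mulVec v x‖ ^ 2 = ∑ x, ‖v x‖ ^ 2 := by
  have h1 : ∀ u : m → ℂ, star u ⬝ᵥ u = ((∑ x, ‖u x‖ ^ 2 : ℝ) : ℂ) := by
    intro u
    rw [Complex.ofReal_sum]
    refine Finset.sum_congr rfl (fun x _ => ?_)
    rw [Pi.star_apply, Complex.star_def, mul_comm, Complex.mul_conj]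
    rw [Complex.normSq_eq_norm_sq]
  have key : star (A.mulVec v) ⬝ᵥ (A.mulVec v) = star v ⬝ᵥ v := by
    rw [Matrix.star_mulVec, Matrix.dotProduct_mulVec, Matrix.vecMul_vecMul, h, Matrix.vecMul_one]
  rw [h1, h1] at key
  exact_mod_cast key

lemma sum_shiftIdx {β : Type*} [AddCommMonoid β] (n : ℕ) [NeZero n] (f : WalkIdx n → β) :
    ∑ x, f (shiftIdx n x) = ∑ x, f x :=
  Equiv.sum_comp (Function.Involutive.toPerm (shiftIdx n) (shiftIdx_invol n)) f

lemma coin_norm (n : ℕ) [NeZero n] (l : ℝ) (hl : 0 ≤ l) (w : WalkIdx n → ℂ) :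
    ∑ x, ‖(coinOp n l).mulVec w x‖ ^ 2 = ∑ x, ‖w x‖ ^ 2 := by
  rw [Fintype.sum_prod_type, Fintype.sum_prod_type (f := fun x : WalkIdx n => ‖w x‖ ^ 2)]
  refine Finset.sum_congr rfl (fun i _ => ?_)
  rw [Fintype.sum_prod_type, Fintype.sum_prod_type (f := fun x : ZMod n × Fin 5 => ‖w (i, x.1, x.2)‖ ^ 2)]
  refine Finset.sum_congr rfl (fun j _ => ?_)
  have hc : ∀ c : Fin 5, (coinOp n l).mulVec w (i, j, c)
      = (groverCoin l).mulVec (fun c' => w (i, j, c')) c := by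
    intro c
    rw [coinOp_mulVec]
    rfl
  rw [Finset.sum_congr rfl (fun c _ => by rw [hc c])]
  exact norm_mulVec_eq (groverCoin l) (grover_unitary l hl) (fun c' => w (i, j, c'))

lemma search_norm (n : ℕ) [NeZero n] (l : ℝ) (hl : 0 ≤ l) (M : Finset (ZMod n × ZMod n))
    (v : WalkIdx n → ℂ) :
    ∑ x, ‖(searchOp n l M).mulVec v x‖ ^ 2 = ∑ x, ‖v x‖ ^ 2 := by
  rw [searchOp, ← Matrix.mulVec_mulVec, ← Matrix.mulVec_mulVec, shiftOp_mulVec]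
  rw [sum_shiftIdx n (fun x => ‖(coinOp n l).mulVec ((queryOp n M).mulVec v) x‖ ^ 2)]
  rw [coin_norm n l hl]
  rw [queryOp_mulVec]
  refine Finset.sum_congr rfl (fun x _ => ?_)
  by_cases hx : (x.1, x.2.1) ∈ M <;> simp [hx]

lemma search_pow_norm (n : ℕ) [NeZero n] (l : ℝ) (hl : 0 ≤ l) (M : Finset (ZMod n × ZMod n))
    (v : WalkIdx n → ℂ) (t : ℕ) :
    ∑ x, ‖(searchOp n l M ^ t).mulVec v x‖ ^ 2 = ∑ x, ‖v x‖ ^ 2 := by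
  induction t with
  | zero => simp [Matrix.one_mulVec]
  | succ t ih =>
      rw [pow_succ', ← Matrix.mulVec_mulVec, search_norm n l hl, ih]

lemma stat_fixed (n : ℕ) [NeZero n] (l : ℝ) (hl : 0 ≤ l) (i₀ j₀ : ZMod n)
    (h1 : i₀ + 1 ≠ i₀) :
    (searchOp n l {(i₀, j₀), (i₀ + 1, j₀)}).mulVec (phiStat n l i₀ j₀) = phiStat n l i₀ j₀ := by
  rw [searchOp, ← Matrix.mulVec_mulVec, ← Matrix.mulVec_mulVec]
  rw [queryOp_mulVec, coin_query_fix n l hl i₀ j₀ h1, shiftOp_mulVec]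
  funext x
  exact phiStat_shift n l i₀ j₀ x

lemma stat_fixed_pow (n : ℕ) [NeZero n] (l : ℝ) (hl : 0 ≤ l) (i₀ j₀ : ZMod n)
    (h1 : i₀ + 1 ≠ i₀) (t : ℕ) :
    (searchOp n l {(i₀, j₀), (i₀ + 1, j₀)} ^ t).mulVec (phiStat n l i₀ j₀)
      = phiStat n l i₀ j₀ := by
  induction t with
  | zero => simp [Matrix.one_mulVec]
  | succ t ih =>
      rw [pow_succ', ← Matrix.mulVec_mulVec, ih, stat_fixed n l hl i₀ j₀ h1]


lemma sum_ite_marked (n : ℕ) [NeZero n] (M : Finset (ZMod n × ZMod n)) (K : ℝ) :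
    ∑ x : WalkIdx n, (if (x.1, x.2.1) ∈ M then K else 0) = (M.card * 5) * K := by
  rw [Fintype.sum_prod_type]
  simp only [Fintype.sum_prod_type]
  have hc : ∀ (i j : ZMod n), (∑ _c : Fin 5, (if (i, j) ∈ M then K else 0))
      = (if (i, j) ∈ M then 5 * K else 0) := by
    intro i j
    by_cases h : (i, j) ∈ M <;> simp [h] <;> ring
  simp only [hc]
  rw [← Fintype.sum_prod_type (f := fun p : ZMod n × ZMod n => if p ∈ M then 5 * K else 0)]
  rw [Finset.sum_ite_mem Finset.univ M (fun _ => 5 * K)]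
  rw [Finset.univ_inter, Finset.sum_const, nsmul_eq_mul]
  ring


section NormBounds

variable (n : ℕ) [NeZero n] (l : ℝ) (i₀ j₀ : ZMod n)

lemma npos : (0:ℝ) < (n:ℝ) := by
  exact_mod_cast Nat.pos_of_ne_zero (NeZero.ne n)

lemma psi0_norm_le (hl : 0 ≤ l) (hl1 : l ≤ 1) (x : WalkIdx n) :
    ‖psi0 n l x‖ ≤ 1 / (2 * (n:ℝ)) := by
  have h4 : (0:ℝ) < 4 + l := by linarith
  have hqpos : (0:ℝ) < Real.sqrt (4 + l) := Real.sqrt_pos.mpr h4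
  have hq_ge : (2:ℝ) ≤ Real.sqrt (4 + l) := by
    rw [show (2:ℝ) = Real.sqrt 4 by
      rw [show (4:ℝ) = 2 ^ 2 by norm_num, Real.sqrt_sq (by norm_num)]]
    exact Real.sqrt_le_sqrt (by linarith)
  have hnpos : (0:ℝ) < (n:ℝ) := npos n
  have hsc : ‖scState l x.2.2‖ ≤ 1 / 2 := by
    rw [scState_eq, Complex.norm_real, Real.norm_eq_abs, scR,
      abs_of_nonneg (by positivity)]
    rw [div_le_iff₀ hqpos]
    have hnum : (if x.2.2 = 4 then Real.sqrt l else 1) ≤ 1 := by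
      split
      · exact Real.sqrt_le_one.mpr hl1
      · exact le_refl 1
    linarith
  have hpn : ‖psi0 n l x‖ = (1 / (n:ℝ)) * ‖scState l x.2.2‖ := by
    simp only [psi0]
    rw [norm_mul, norm_div, norm_one, RCLike.norm_natCast]
  rw [hpn]
  calc (1 / (n:ℝ)) * ‖scState l x.2.2‖ ≤ (1 / (n:ℝ)) * (1/2) :=
        mul_le_mul_of_nonneg_left hsc (by positivity)
    _ = 1 / (2 * (n:ℝ)) := by ring

lemma phiPert_norm_le (hl : 0 ≤ l) (hl1 : l ≤ 1) (x : WalkIdx n) :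
    ‖phiPert n l i₀ j₀ x‖ ≤ 5 / (2 * (n:ℝ)) := by
  have h4 : (0:ℝ) < 4 + l := by linarith
  have hq2 : Real.sqrt (4 + l) * Real.sqrt (4 + l) = 4 + l := Real.mul_self_sqrt h4.le
  have hqpos : (0:ℝ) < Real.sqrt (4 + l) := Real.sqrt_pos.mpr h4
  have hq_le : Real.sqrt (4 + l) ≤ 5 / 2 := by
    rw [show (5/2:ℝ) = Real.sqrt ((5/2) ^ 2) from (Real.sqrt_sq (by norm_num)).symm]
    exact Real.sqrt_le_sqrt (by nlinarith)
  have hnpos : (0:ℝ) < (n:ℝ) := npos n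
  have hpertval : ‖(((4 + l : ℝ) : ℂ) * ((1 / (n : ℂ)) * (1 / ((Real.sqrt (4 + l) : ℝ) : ℂ))))‖
      = Real.sqrt (4 + l) / (n:ℝ) := by
    rw [norm_mul, norm_mul, norm_div, norm_div, Complex.norm_real, Complex.norm_real,
      RCLike.norm_natCast, norm_one]
    rw [Real.norm_eq_abs, Real.norm_eq_abs, abs_of_nonneg h4.le, abs_of_nonneg hqpos.le]
    field_simp
    linear_combination -hq2
  rw [phiPert]
  split
  · rw [hpertval]
    rw [div_le_div_iff₀ hnpos (by positivity)]
    nlinarith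
  · simp
    positivity

lemma phiStat_norm_le (hl : 0 ≤ l) (hl1 : l ≤ 1) (x : WalkIdx n) :
    ‖phiStat n l i₀ j₀ x‖ ≤ 3 / (n:ℝ) := by
  have hnpos : (0:ℝ) < (n:ℝ) := npos n
  calc ‖phiStat n l i₀ j₀ x‖ = ‖psi0 n l x - phiPert n l i₀ j₀ x‖ := by rw [phiStat]
    _ ≤ ‖psi0 n l x‖ + ‖phiPert n l i₀ j₀ x‖ := norm_sub_le _ _
    _ ≤ 1 / (2 * (n:ℝ)) + 5 / (2 * (n:ℝ)) :=
        add_le_add (psi0_norm_le n l hl hl1 x) (phiPert_norm_le n l i₀ j₀ hl hl1 x)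
    _ = 3 / (n:ℝ) := by field_simp; ring

lemma phiPert_sum_le (hl : 0 ≤ l) (hl1 : l ≤ 1) :
    ∑ x : WalkIdx n, ‖phiPert n l i₀ j₀ x‖ ^ 2 ≤ 13 / (n:ℝ) ^ 2 := by
  have hnpos : (0:ℝ) < (n:ℝ) := npos n
  have hne : ((i₀, j₀, (3 : Fin 5)) : WalkIdx n) ≠ (i₀ + 1, j₀, (2 : Fin 5)) := by
    simp [Prod.ext_iff]
  have hzero : ∀ x ∈ Finset.univ,
      x ∉ ({(i₀, j₀, (3 : Fin 5)), (i₀ + 1, j₀, (2 : Fin 5))} : Finset (WalkIdx n)) →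
      ‖phiPert n l i₀ j₀ x‖ ^ 2 = 0 := by
    intro x _ hx
    simp only [Finset.mem_insert, Finset.mem_singleton] at hx
    push_neg at hx
    rw [phiPert, if_neg (by tauto)]
    simp
  rw [← Finset.sum_subset (Finset.subset_univ _) hzero]
  rw [Finset.sum_pair hne]
  have hb : ∀ x, ‖phiPert n l i₀ j₀ x‖ ^ 2 ≤ (5 / (2 * (n:ℝ))) ^ 2 := by
    intro x
    have := phiPert_norm_le n l i₀ j₀ hl hl1 x
    nlinarith [norm_nonneg (phiPert n l i₀ j₀ x)]
  calc ‖phiPert n l i₀ j₀ (i₀, j₀, (3:Fin 5))‖ ^ 2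
        + ‖phiPert n l i₀ j₀ (i₀ + 1, j₀, (2:Fin 5))‖ ^ 2
      ≤ (5 / (2 * (n:ℝ))) ^ 2 + (5 / (2 * (n:ℝ))) ^ 2 := add_le_add (hb _) (hb _)
    _ ≤ 13 / (n:ℝ) ^ 2 := by
        have he : (5 / (2 * (n:ℝ))) ^ 2 + (5 / (2 * (n:ℝ))) ^ 2 = (25/2) / (n:ℝ) ^ 2 := by
          field_simp
          ring
        rw [he]
        gcongr
        norm_num

end NormBounds


end Aux


/-- Lemma 2: for two horizontally adjacent marked vertices and self-loop weight
`l = 4/n²`, the probability of finding a marked vertex after any number of steps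
is `O(1/n²)`. -/
theorem probMarked_le :
    ∃ C : ℝ, 0 < C ∧ ∀ (n : ℕ) [NeZero n], 3 ≤ n → ∀ (i₀ j₀ : ZMod n) (t : ℕ),
      probMarked n (4 / (n : ℝ) ^ 2) {(i₀, j₀), (i₀ + 1, j₀)} t ≤ C / (n : ℝ) ^ 2 := by
  refine ⟨300, by norm_num, ?_⟩
  intro n _ hn i₀ j₀ t
  have hnR : (3:ℝ) ≤ (n:ℝ) := by exact_mod_cast hn
  have hnpos : (0:ℝ) < (n:ℝ) := by linarith
  set l : ℝ := 4 / (n : ℝ) ^ 2 with hldef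
  have hl : 0 ≤ l := by positivity
  have hl1 : l ≤ 1 := by
    rw [hldef, div_le_one (by positivity)]
    nlinarith
  haveI : Fact (1 < n) := ⟨by omega⟩
  have h1 : i₀ + 1 ≠ i₀ := by
    intro h
    have h0 : (1 : ZMod n) = 0 := by
      nth_rewrite 2 [← add_zero i₀] at h
      exact add_left_cancel h
    exact one_ne_zero h0
  have hdecomp : ∀ x, (searchOp n l {(i₀, j₀), (i₀ + 1, j₀)} ^ t).mulVec (psi0 n l) x
      = phiStat n l i₀ j₀ x
        + (searchOp n l {(i₀, j₀), (i₀ + 1, j₀)} ^ t).mulVec (phiPert n l i₀ j₀) x := by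
    intro x
    have hsplit : psi0 n l = phiStat n l i₀ j₀ + phiPert n l i₀ j₀ := by
      funext y
      simp [phiStat]
    rw [hsplit, Matrix.mulVec_add, Pi.add_apply, stat_fixed_pow n l hl i₀ j₀ h1 t]
  rw [probMarked]
  set w : WalkIdx n → ℂ := (searchOp n l {(i₀, j₀), (i₀ + 1, j₀)} ^ t).mulVec (phiPert n l i₀ j₀)
    with hw
  have hstep1 : ∀ x : WalkIdx n,
      (if (x.1, x.2.1) ∈ ({(i₀, j₀), (i₀ + 1, j₀)} : Finset (ZMod n × ZMod n)) then
        ‖(searchOp n l {(i₀, j₀), (i₀ + 1, j₀)} ^ t).mulVec (psi0 n l) x‖ ^ 2 else 0)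
      ≤ (if (x.1, x.2.1) ∈ ({(i₀, j₀), (i₀ + 1, j₀)} : Finset (ZMod n × ZMod n)) then
          2 * ‖phiStat n l i₀ j₀ x‖ ^ 2 else 0)
        + 2 * ‖w x‖ ^ 2 := by
    intro x
    split
    · rw [hdecomp x]
      have htri := norm_add_le (phiStat n l i₀ j₀ x) (w x)
      nlinarith [norm_nonneg (phiStat n l i₀ j₀ x), norm_nonneg (w x),
        norm_nonneg (phiStat n l i₀ j₀ x + w x),
        sq_nonneg (‖phiStat n l i₀ j₀ x‖ - ‖w x‖),
        mul_self_le_mul_self (norm_nonneg (phiStat n l i₀ j₀ x + w x)) htri]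
    · positivity
  have hsum2 : ∑ x : WalkIdx n, ‖w x‖ ^ 2 ≤ 13 / (n:ℝ) ^ 2 := by
    rw [hw, search_pow_norm n l hl _ _ t]
    exact phiPert_sum_le n l i₀ j₀ hl hl1
  have hcard : (({(i₀, j₀), (i₀ + 1, j₀)} : Finset (ZMod n × ZMod n)).card : ℝ) ≤ 2 := by
    have h := Finset.card_insert_le ((i₀, j₀)) ({(i₀ + 1, j₀)} : Finset (ZMod n × ZMod n))
    simp only [Finset.card_singleton] at h
    exact_mod_cast h
  calc (∑ x : WalkIdx n, if (x.1, x.2.1) ∈ ({(i₀, j₀), (i₀ + 1, j₀)} : Finset (ZMod n × ZMod n))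
          then ‖(searchOp n l {(i₀, j₀), (i₀ + 1, j₀)} ^ t).mulVec (psi0 n l) x‖ ^ 2 else 0)
      ≤ ∑ x : WalkIdx n,
          ((if (x.1, x.2.1) ∈ ({(i₀, j₀), (i₀ + 1, j₀)} : Finset (ZMod n × ZMod n)) then
            2 * ‖phiStat n l i₀ j₀ x‖ ^ 2 else 0) + 2 * ‖w x‖ ^ 2) :=
        Finset.sum_le_sum (fun x _ => hstep1 x)
    _ = (∑ x : WalkIdx n, (if (x.1, x.2.1) ∈ ({(i₀, j₀), (i₀ + 1, j₀)} : Finset (ZMod n × ZMod n))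
          then 2 * ‖phiStat n l i₀ j₀ x‖ ^ 2 else 0))
        + 2 * ∑ x : WalkIdx n, ‖w x‖ ^ 2 := by
        rw [Finset.sum_add_distrib, Finset.mul_sum]
    _ ≤ (∑ x : WalkIdx n, (if (x.1, x.2.1) ∈ ({(i₀, j₀), (i₀ + 1, j₀)} : Finset (ZMod n × ZMod n))
          then 2 * (3 / (n:ℝ)) ^ 2 else 0))
        + 2 * (13 / (n:ℝ) ^ 2) := by
        apply add_le_add
        · apply Finset.sum_le_sum
          intro x _
          split
          · have := phiStat_norm_le n l i₀ j₀ hl hl1 x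
            nlinarith [norm_nonneg (phiStat n l i₀ j₀ x)]
          · exact le_refl 0
        · linarith [hsum2]
    _ ≤ 2 * 5 * (2 * (3 / (n:ℝ)) ^ 2) + 2 * (13 / (n:ℝ) ^ 2) := by
        rw [sum_ite_marked]
        apply add_le_add_left
        have hpos : (0:ℝ) ≤ 2 * (3 / (n:ℝ)) ^ 2 := by positivity
        calc ((({(i₀, j₀), (i₀ + 1, j₀)} : Finset (ZMod n × ZMod n)).card : ℝ) * 5)
              * (2 * (3 / (n:ℝ)) ^ 2)
            ≤ (2 * 5) * (2 * (3 / (n:ℝ)) ^ 2) := by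
              apply mul_le_mul_of_nonneg_right _ hpos
              nlinarith
          _ = 2 * 5 * (2 * (3 / (n:ℝ)) ^ 2) := by ring
    _ ≤ 300 / (n:ℝ) ^ 2 := by
        have h206 : 2 * 5 * (2 * (3 / (n:ℝ)) ^ 2) + 2 * (13 / (n:ℝ) ^ 2) = 206 / (n:ℝ) ^ 2 := by
          field_simp
          ring
        rw [h206]
        gcongr
        norm_num
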